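/- A function b : X × Y → ℝ ∪ {+∞} is a bipotential if and only if the function c : X × Y → ℝ ∪ {+∞} defined by c(x,y) = b(x,y) − ⟨x,y⟩ is a sync (synchronised convex function). -/

import Mathlib

open scoped Classical
noncomputable section

def ERealConvexOn {X : Type*} [AddCommGroup X] [Module ℝ X] (f : X → EReal) : Prop :=
  ∀ x z : X, ∀ t : ℝ, 0 ≤ t → t ≤ 1 →
    f (t • x + (1 - t) • z) ≤ (t : EReal) * f x + ((1 - t) : EReal) * f z

def SubdiffFst {X Y : Type*} [AddCommGroup X] [Module ℝ X] [AddCommGroup Y] [Module ℝ Y]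
    (pair : X →ₗ[ℝ] Y →ₗ[ℝ] ℝ) (f : X → EReal) (x : X) : Set Y :=
  {y | ∀ z, ((pair (z - x) y : ℝ) : EReal) ≤ f z - f x}

def SubdiffSnd {X Y : Type*} [AddCommGroup X] [Module ℝ X] [AddCommGroup Y] [Module ℝ Y]
    (pair : X →ₗ[ℝ] Y →ₗ[ℝ] ℝ) (g : Y → EReal) (y : Y) : Set X :=
  {x | ∀ w, ((pair x (w - y) : ℝ) : EReal) ≤ g w - g y}

structure IsBipotential {X Y : Type*} [AddCommGroup X] [Module ℝ X] [TopologicalSpace X]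
    [AddCommGroup Y] [Module ℝ Y] [TopologicalSpace Y]
    (pair : X →ₗ[ℝ] Y →ₗ[ℝ] ℝ) (b : X → Y → EReal) : Prop where
  ne_bot : ∀ x y, b x y ≠ ⊥
  convex_lsc_fst : ∀ y, (∃ x, b x y ≠ ⊤) →
    ERealConvexOn (fun x => b x y) ∧ LowerSemicontinuous (fun x => b x y)
  convex_lsc_snd : ∀ x, (∃ y, b x y ≠ ⊤) →
    ERealConvexOn (b x) ∧ LowerSemicontinuous (b x)
  ge_pair : ∀ x y, ((pair x y : ℝ) : EReal) ≤ b x y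
  subdiff_iff₁ : ∀ x y,
    y ∈ SubdiffFst pair (fun x' => b x' y) x ↔ x ∈ SubdiffSnd pair (b x) y
  subdiff_iff₂ : ∀ x y,
    x ∈ SubdiffSnd pair (b x) y ↔ b x y = ((pair x y : ℝ) : EReal)

structure IsSync {X Y : Type*} [AddCommGroup X] [Module ℝ X] [TopologicalSpace X]
    [AddCommGroup Y] [Module ℝ Y] [TopologicalSpace Y] (c : X → Y → EReal) : Prop where
  nonneg : ∀ x y, 0 ≤ c x y
  convex_lsc_fst : ∀ y, (∃ x, c x y ≠ ⊤) →
    ERealConvexOn (fun x => c x y) ∧ LowerSemicontinuous (fun x => c x y)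
  convex_lsc_snd : ∀ x, (∃ y, c x y ≠ ⊤) →
    ERealConvexOn (c x) ∧ LowerSemicontinuous (c x)
  min_snd : ∀ x, (∃ y, c x y ≠ ⊤) → ∀ y₀, (∀ y, c x y₀ ≤ c x y) → c x y₀ = 0
  min_fst : ∀ y, (∃ x, c x y ≠ ⊤) → ∀ x₀, (∀ x, c x₀ y ≤ c x y) → c x₀ y = 0

namespace BipotAux

lemma sub_coe_ne_bot {a : EReal} (ha : a ≠ ⊥) (r : ℝ) : a - (r : EReal) ≠ ⊥ := by
  induction a with
  | bot => exact absurd rfl ha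
  | coe a => rw [← EReal.coe_sub]; exact EReal.coe_ne_bot _
  | top => rw [EReal.top_sub_coe]; exact top_ne_bot

lemma sub_coe_eq_top_iff {a : EReal} (r : ℝ) : a - (r : EReal) = ⊤ ↔ a = ⊤ := by
  induction a with
  | bot => simp [EReal.bot_sub]
  | coe a =>
      rw [← EReal.coe_sub]
      exact iff_of_false (EReal.coe_ne_top _) (EReal.coe_ne_top _)
  | top => simp [EReal.top_sub_coe]

lemma key {A r s : ℝ} {b : EReal} (hb : b ≠ ⊥) :
    (A : EReal) - (r : EReal) ≤ b - (s : EReal) ↔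
      (((s - r : ℝ)) : EReal) ≤ b - (A : EReal) := by
  induction b with
  | bot => exact absurd rfl hb
  | coe B =>
      rw [← EReal.coe_sub, ← EReal.coe_sub, ← EReal.coe_sub,
        EReal.coe_le_coe_iff, EReal.coe_le_coe_iff]
      constructor <;> intro h <;> linarith
  | top => simp [EReal.top_sub_coe, le_top]

lemma exists_real {a : EReal} (ht : a ≠ ⊤) (hbo : a ≠ ⊥) : ∃ A : ℝ, a = (A : EReal) :=
  ⟨a.toReal, (EReal.coe_toReal ht hbo).symm⟩

lemma mul_ne_bot_of_nonneg {s : ℝ} (hs : 0 ≤ s) {v : EReal} (hv : v ≠ ⊥) :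
    (s : EReal) * v ≠ ⊥ := by
  induction v with
  | bot => exact absurd rfl hv
  | coe v => rw [← EReal.coe_mul]; exact EReal.coe_ne_bot _
  | top =>
      rcases eq_or_lt_of_le hs with h | h
      · rw [← h]; simp
      · rw [EReal.coe_mul_top_of_pos h]; exact top_ne_bot

lemma add_coe_ne_bot {a : EReal} (ha : a ≠ ⊥) (r : ℝ) : a + (r : EReal) ≠ ⊥ := by
  have := sub_coe_ne_bot ha (-r)
  rwa [sub_eq_add_neg, ← EReal.coe_neg, neg_neg] at this

lemma convex_add_linear {X : Type*} [AddCommGroup X] [Module ℝ X] {f : X → EReal}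
    (hf : ∀ x, f x ≠ ⊥) (ℓ : X →ₗ[ℝ] ℝ) (h : ERealConvexOn f) :
    ERealConvexOn (fun x => f x + ((ℓ x : ℝ) : EReal)) := by
  intro x z t ht0 ht1
  have hl : ℓ (t • x + (1 - t) • z) = t * ℓ x + (1 - t) * ℓ z := by
    simp [map_add, map_smul, smul_eq_mul]
  have hco : ((1 : EReal) - (t : EReal)) = (((1 - t : ℝ)) : EReal) := by norm_cast
  rcases eq_or_lt_of_le ht0 with h0 | h0
  · simp [← h0]
  rcases eq_or_lt_of_le ht1 with h1 | h1
  · simp only [h1, one_smul, sub_self, zero_smul, add_zero, EReal.coe_one, one_mul]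
    rw [show ((1 : EReal) - 1) = ((0 : ℝ) : EReal) from by rw [show (1 : EReal) = ((1 : ℝ) : EReal) from rfl, ← EReal.coe_sub]; norm_num, EReal.coe_zero, zero_mul, add_zero]
  have h1t : (0 : ℝ) < 1 - t := by linarith
  have hne1 : f x + ((ℓ x : ℝ) : EReal) ≠ ⊥ := add_coe_ne_bot (hf x) _
  have hne2 : f z + ((ℓ z : ℝ) : EReal) ≠ ⊥ := add_coe_ne_bot (hf z) _
  by_cases hx : f x = ⊤
  · simp only [hco]
    rw [hx, EReal.top_add_coe, EReal.mul_top_of_pos (by exact_mod_cast h0),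
      EReal.top_add_of_ne_bot (mul_ne_bot_of_nonneg h1t.le hne2)]
    exact le_top
  by_cases hz : f z = ⊤
  · simp only [hco]
    rw [hz, EReal.top_add_coe, EReal.mul_top_of_pos (by exact_mod_cast h1t),
      EReal.add_top_of_ne_bot (mul_ne_bot_of_nonneg h0.le hne1)]
    exact le_top
  obtain ⟨A, hA⟩ := exists_real hx (hf x)
  obtain ⟨B, hB⟩ := exists_real hz (hf z)
  have hc := h x z t ht0 ht1
  rw [hA, hB, hco, ← EReal.coe_mul, ← EReal.coe_mul, ← EReal.coe_add] at hc
  have hmt : f (t • x + (1 - t) • z) ≠ ⊤ := by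
    intro hh
    rw [hh] at hc
    exact (EReal.coe_ne_top _) (top_le_iff.mp hc)
  obtain ⟨M, hM⟩ := exists_real hmt (hf _)
  rw [hM, EReal.coe_le_coe_iff] at hc
  simp only [hco, hA, hB, hM, hl, ← EReal.coe_add, ← EReal.coe_mul, EReal.coe_le_coe_iff]
  nlinarith [hc]

lemma lsc_add_cont {X : Type*} [TopologicalSpace X] {f : X → EReal} {g : X → ℝ}
    (hf : LowerSemicontinuous f) (hg : Continuous g) :
    LowerSemicontinuous fun x => f x + ((g x : ℝ) : EReal) :=
  hf.add' (Continuous.lowerSemicontinuous (continuous_coe_real_ereal.comp hg)) fun x =>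
    EReal.continuousAt_add (Or.inr (EReal.coe_ne_bot _)) (Or.inr (EReal.coe_ne_top _))

end BipotAux

section MainAux
open BipotAux
variable {X Y : Type*} [AddCommGroup X] [Module ℝ X] [AddCommGroup Y] [Module ℝ Y]

lemma mem_subdiffFst_iff' (pair : X →ₗ[ℝ] Y →ₗ[ℝ] ℝ) (b : X → Y → EReal)
    (hb : ∀ x y, b x y ≠ ⊥) (x : X) (y : Y) :
    y ∈ SubdiffFst pair (fun x' => b x' y) x ↔
      (b x y ≠ ⊤ ∧
        ∀ z, b x y - ((pair x y : ℝ) : EReal) ≤ b z y - ((pair z y : ℝ) : EReal)) := by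
  simp only [SubdiffFst, Set.mem_setOf_eq]
  constructor
  · intro h
    have hxt : b x y ≠ ⊤ := by
      intro hh
      have h0 := h x
      rw [sub_self, map_zero, LinearMap.zero_apply, hh, EReal.sub_top] at h0
      simpa using h0
    obtain ⟨A, hA⟩ := exists_real hxt (hb x y)
    refine ⟨hxt, fun z => ?_⟩
    have hz := h z
    rw [map_sub, LinearMap.sub_apply, hA] at hz
    rw [hA]
    exact (key (hb z y)).mpr hz
  · rintro ⟨hxt, h⟩ z
    obtain ⟨A, hA⟩ := exists_real hxt (hb x y)
    have hz := h z
    rw [hA] at hz ⊢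
    rw [map_sub, LinearMap.sub_apply]
    exact (key (hb z y)).mp hz

lemma mem_subdiffSnd_iff' (pair : X →ₗ[ℝ] Y →ₗ[ℝ] ℝ) (b : X → Y → EReal)
    (hb : ∀ x y, b x y ≠ ⊥) (x : X) (y : Y) :
    x ∈ SubdiffSnd pair (b x) y ↔
      (b x y ≠ ⊤ ∧
        ∀ w, b x y - ((pair x y : ℝ) : EReal) ≤ b x w - ((pair x w : ℝ) : EReal)) := by
  simp only [SubdiffSnd, Set.mem_setOf_eq]
  constructor
  · intro h
    have hxt : b x y ≠ ⊤ := by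
      intro hh
      have h0 := h y
      rw [sub_self, map_zero, hh, EReal.sub_top] at h0
      simpa using h0
    obtain ⟨A, hA⟩ := exists_real hxt (hb x y)
    refine ⟨hxt, fun w => ?_⟩
    have hw := h w
    rw [map_sub, hA] at hw
    rw [hA]
    exact (key (hb x w)).mpr hw
  · rintro ⟨hxt, h⟩ w
    obtain ⟨A, hA⟩ := exists_real hxt (hb x y)
    have hw := h w
    rw [hA] at hw ⊢
    rw [map_sub]
    exact (key (hb x w)).mp hw

end MainAux

theorem bipotential_iff_sync {X Y : Type*} [AddCommGroup X] [Module ℝ X] [TopologicalSpace X]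
    [AddCommGroup Y] [Module ℝ Y] [TopologicalSpace Y]
    (pair : X →ₗ[ℝ] Y →ₗ[ℝ] ℝ)
    (hp₁ : ∀ x, Continuous fun y => pair x y) (hp₂ : ∀ y, Continuous fun x => pair x y)
    (b : X → Y → EReal) (hb : ∀ x y, b x y ≠ ⊥) :
    IsBipotential pair b ↔ IsSync (fun x y => b x y - ((pair x y : ℝ) : EReal)) := by
  have hcb : ∀ x y, b x y - ((pair x y : ℝ) : EReal) ≠ ⊥ := fun x y =>
    BipotAux.sub_coe_ne_bot (hb x y) _
  have hct : ∀ x y, b x y - ((pair x y : ℝ) : EReal) = ⊤ ↔ b x y = ⊤ := fun x y =>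
    BipotAux.sub_coe_eq_top_iff _
  -- rewriting functions
  have hfun₁ : ∀ y : Y, (fun x => b x y - ((pair x y : ℝ) : EReal)) =
      fun x => b x y + (((-(pair.flip y)) x : ℝ) : EReal) := by
    intro y; funext x
    rw [LinearMap.neg_apply, LinearMap.flip_apply, EReal.coe_neg, ← sub_eq_add_neg]
  have hfun₂ : ∀ x : X, (fun y => b x y - ((pair x y : ℝ) : EReal)) =
      fun y => b x y + (((-(pair x)) y : ℝ) : EReal) := by
    intro x; funext y
    rw [LinearMap.neg_apply, EReal.coe_neg, ← sub_eq_add_neg]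
  have hgun₁ : ∀ y : Y, (fun x => b x y) =
      fun x => (b x y - ((pair x y : ℝ) : EReal)) + (((pair.flip y) x : ℝ) : EReal) := by
    intro y; funext x
    rw [LinearMap.flip_apply, EReal.sub_add_cancel]
  have hgun₂ : ∀ x : X, (fun y => b x y) =
      fun y => (b x y - ((pair x y : ℝ) : EReal)) + (((pair x) y : ℝ) : EReal) := by
    intro x; funext y
    rw [EReal.sub_add_cancel]
  constructor
  · intro hB
    refine ⟨?_, ?_, ?_, ?_, ?_⟩
    · intro x y
      show (0 : EReal) ≤ b x y - ((pair x y : ℝ) : EReal)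
      rw [EReal.le_sub_iff_add_le (Or.inl (EReal.coe_ne_bot _)) (Or.inl (EReal.coe_ne_top _)),
        zero_add]
      exact hB.ge_pair x y
    · intro y hy
      have hy' : ∃ x, b x y ≠ ⊤ := by
        obtain ⟨x, hx⟩ := hy
        exact ⟨x, fun hh => hx ((hct x y).mpr hh)⟩
      obtain ⟨hconv, hlsc⟩ := hB.convex_lsc_fst y hy'
      rw [hfun₁ y]
      exact ⟨BipotAux.convex_add_linear (fun x => hb x y) _ hconv,
        BipotAux.lsc_add_cont hlsc (Continuous.neg (hp₂ y))⟩
    · intro x hx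
      have hx' : ∃ y, b x y ≠ ⊤ := by
        obtain ⟨y, hy⟩ := hx
        exact ⟨y, fun hh => hy ((hct x y).mpr hh)⟩
      obtain ⟨hconv, hlsc⟩ := hB.convex_lsc_snd x hx'
      rw [show (fun y => b x y - ((pair x y : ℝ) : EReal)) = _ from hfun₂ x]
      exact ⟨BipotAux.convex_add_linear (fun y => hb x y) _ hconv,
        BipotAux.lsc_add_cont hlsc (Continuous.neg (hp₁ x))⟩
    · intro x hx y₀ hmin
      obtain ⟨w, hw⟩ := hx
      have h1 : b x y₀ - ((pair x y₀ : ℝ) : EReal) ≠ ⊤ := fun hh =>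
        hw (top_le_iff.mp ((le_of_eq hh.symm).trans (hmin w)))
      have hy0t : b x y₀ ≠ ⊤ := fun hh => h1 ((hct x y₀).mpr hh)
      have hmem : x ∈ SubdiffSnd pair (b x) y₀ :=
        (mem_subdiffSnd_iff' pair b hb x y₀).mpr ⟨hy0t, hmin⟩
      have hbp := (hB.subdiff_iff₂ x y₀).mp hmem
      show b x y₀ - ((pair x y₀ : ℝ) : EReal) = 0
      rw [hbp, ← EReal.coe_sub, sub_self, EReal.coe_zero]
    · intro y hy x₀ hmin
      obtain ⟨w, hw⟩ := hy
      have h1 : b x₀ y - ((pair x₀ y : ℝ) : EReal) ≠ ⊤ := fun hh =>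
        hw (top_le_iff.mp ((le_of_eq hh.symm).trans (hmin w)))
      have hx0t : b x₀ y ≠ ⊤ := fun hh => h1 ((hct x₀ y).mpr hh)
      have hmem : y ∈ SubdiffFst pair (fun x' => b x' y) x₀ :=
        (mem_subdiffFst_iff' pair b hb x₀ y).mpr ⟨hx0t, hmin⟩
      have hbp := (hB.subdiff_iff₂ x₀ y).mp ((hB.subdiff_iff₁ x₀ y).mp hmem)
      show b x₀ y - ((pair x₀ y : ℝ) : EReal) = 0
      rw [hbp, ← EReal.coe_sub, sub_self, EReal.coe_zero]
  · intro hS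
    have hSnd : ∀ x y, x ∈ SubdiffSnd pair (b x) y ↔ b x y = ((pair x y : ℝ) : EReal) := by
      intro x y
      rw [mem_subdiffSnd_iff' pair b hb]
      constructor
      · rintro ⟨hxt, hmin⟩
        have h0 := hS.min_snd x ⟨y, fun hh => hxt ((hct x y).mp hh)⟩ y hmin
        have h1 : b x y - ((pair x y : ℝ) : EReal) + ((pair x y : ℝ) : EReal) = b x y :=
          EReal.sub_add_cancel
        rw [h0, zero_add] at h1
        exact h1.symm
      · intro hbp
        have h0 : b x y - ((pair x y : ℝ) : EReal) = 0 := by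
          rw [hbp, ← EReal.coe_sub, sub_self, EReal.coe_zero]
        refine ⟨by rw [hbp]; exact EReal.coe_ne_top _, fun w => ?_⟩
        rw [h0]
        exact hS.nonneg x w
    have hFst : ∀ x y, y ∈ SubdiffFst pair (fun x' => b x' y) x ↔
        b x y = ((pair x y : ℝ) : EReal) := by
      intro x y
      rw [mem_subdiffFst_iff' pair b hb]
      constructor
      · rintro ⟨hxt, hmin⟩
        have h0 := hS.min_fst y ⟨x, fun hh => hxt ((hct x y).mp hh)⟩ x hmin
        have h1 : b x y - ((pair x y : ℝ) : EReal) + ((pair x y : ℝ) : EReal) = b x y :=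
          EReal.sub_add_cancel
        rw [h0, zero_add] at h1
        exact h1.symm
      · intro hbp
        have h0 : b x y - ((pair x y : ℝ) : EReal) = 0 := by
          rw [hbp, ← EReal.coe_sub, sub_self, EReal.coe_zero]
        refine ⟨by rw [hbp]; exact EReal.coe_ne_top _, fun z => ?_⟩
        rw [h0]
        exact hS.nonneg z y
    refine ⟨hb, ?_, ?_, ?_, fun x y => (hFst x y).trans (hSnd x y).symm, hSnd⟩
    · intro y hy
      have hy' : ∃ x, b x y - ((pair x y : ℝ) : EReal) ≠ ⊤ := by
        obtain ⟨x, hx⟩ := hy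
        exact ⟨x, fun hh => hx ((hct x y).mp hh)⟩
      obtain ⟨hconv, hlsc⟩ := hS.convex_lsc_fst y hy'
      rw [hgun₁ y]
      exact ⟨BipotAux.convex_add_linear (fun x => hcb x y) _ hconv,
        BipotAux.lsc_add_cont hlsc (hp₂ y)⟩
    · intro x hx
      have hx' : ∃ y, b x y - ((pair x y : ℝ) : EReal) ≠ ⊤ := by
        obtain ⟨y, hy⟩ := hx
        exact ⟨y, fun hh => hy ((hct x y).mp hh)⟩
      obtain ⟨hconv, hlsc⟩ := hS.convex_lsc_snd x hx'
      rw [show (b x) = _ from hgun₂ x]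
      exact ⟨BipotAux.convex_add_linear (fun y => hcb x y) _ hconv,
        BipotAux.lsc_add_cont hlsc (hp₁ x)⟩
    · intro x y
      have h0 := hS.nonneg x y
      rwa [EReal.le_sub_iff_add_le (Or.inl (EReal.coe_ne_bot _)) (Or.inl (EReal.coe_ne_top _)),
        zero_add] at h0
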